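/- Let E be a real inner product space, J : E → E skew-adjoint, C : F → E linear, D : F → F self-adjoint semi-elliptic, B : U → E linear, and e ∈ E. If a curve z satisfies z'(t) = (J - C∘D∘C*) e + B (u t), then for ℰ(t) := ⟨e, z t⟩ one has ℰ'(t) = -⟨C* e, D (C* e)⟩ + ⟨B* e, u t⟩ ≤ ⟨B* e, u t⟩. -/

import Mathlib

open RealInnerProductSpace

/-- Abstract exergy balance inequality for the port-Hamiltonian reformulation:
along any solution of `z' = (J - C∘D∘C*) e + B u`, the exergy
`ℰ t = ⟪e, z t⟫` satisfies
`ℰ' t = -⟪C* e, D (C* e)⟫ + ⟪B* e, u t⟫ ≤ ⟪B* e, u t⟫`. -/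
theorem exergy_balance_inequality
    {E F U : Type*} [NormedAddCommGroup E] [InnerProductSpace ℝ E]
    [NormedAddCommGroup F] [InnerProductSpace ℝ F]
    [NormedAddCommGroup U] [InnerProductSpace ℝ U]
    (J : E →ₗ[ℝ] E) (hJ : ∀ x y : E, ⟪x, J y⟫ = -⟪y, J x⟫)
    (C : F →ₗ[ℝ] E) (Cstar : E →ₗ[ℝ] F)
    (hCadj : ∀ (x : E) (y : F), ⟪x, C y⟫ = ⟪Cstar x, y⟫)
    (D : F →ₗ[ℝ] F)
    (hDsym : ∀ y y' : F, ⟪y, D y'⟫ = ⟪y', D y⟫)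
    (hD : ∀ y : F, 0 ≤ ⟪y, D y⟫)
    (B : U →ₗ[ℝ] E) (Bstar : E →ₗ[ℝ] U)
    (hBadj : ∀ (x : E) (v : U), ⟪x, B v⟫ = ⟪Bstar x, v⟫)
    (e : E) (z : ℝ → E) (u : ℝ → U)
    (hz : ∀ t : ℝ, HasDerivAt z ((J - C ∘ₗ D ∘ₗ Cstar) e + B (u t)) t) :
    ∀ t : ℝ,
      HasDerivAt (fun t => ⟪e, z t⟫) (-⟪Cstar e, D (Cstar e)⟫ + ⟪Bstar e, u t⟫) t ∧
      -⟪Cstar e, D (Cstar e)⟫ + ⟪Bstar e, u t⟫ ≤ ⟪Bstar e, u t⟫ := by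
  intro t
  have hJe : ⟪e, J e⟫ = 0 := by have := hJ e e; linarith
  have key : ⟪e, (J - C ∘ₗ D ∘ₗ Cstar) e + B (u t)⟫
      = -⟪Cstar e, D (Cstar e)⟫ + ⟪Bstar e, u t⟫ := by
    simp only [LinearMap.sub_apply, LinearMap.comp_apply, inner_add_right, inner_sub_right,
      hJe, hCadj, hBadj]
    ring
  refine ⟨?_, by linarith [hD (Cstar e)]⟩
  have := (hasDerivAt_const t e).inner ℝ (hz t)
  rw [← key]; simpa using this
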